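/- For every partition μ and every nonnegative integer n, Σ_{|λ/μ|=n} f_{λ/μ} / H_λ = 1/H_μ, where the sum ranges over all partitions λ containing μ with |λ| − |μ| = n. -/

import Mathlib

open scoped Classical

namespace HDX

open Polynomial Finset
variable {F : Type*} [Field F] [DecidableEq F]

lemma coeff_top_basis (s : Finset F) {x : F} (hx : x ∈ s) :
    (Lagrange.basis s id x).coeff (s.card - 1) = Lagrange.nodalWeight s id x := by
  classical
  rw [Lagrange.basis_eq_prod_sub_inv_mul_nodal_div hx, ← Lagrange.nodal_erase_eq_nodal_div hx]
  have hdeg : (Lagrange.nodal (s.erase x) id).natDegree = s.card - 1 := by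
    rw [Lagrange.natDegree_nodal, Finset.card_erase_of_mem hx]
  rw [coeff_C_mul, ← hdeg, (Lagrange.nodal_monic).coeff_natDegree, mul_one]

lemma coeff_top_eq_sum (s : Finset F) (hs : s.Nonempty) (f : F[X]) (hf : f.degree < s.card) :
    f.coeff (s.card - 1) = ∑ x ∈ s, f.eval x * Lagrange.nodalWeight s id x := by
  classical
  conv_lhs => rw [Lagrange.eq_interpolate (Set.injOn_id _) hf]
  rw [Lagrange.interpolate_apply, Polynomial.finset_sum_coeff]
  refine Finset.sum_congr rfl fun x hx => ?_
  rw [Polynomial.coeff_C_mul, coeff_top_basis s hx]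
  simp

/-- The key algebraic identity. -/
lemma keyIdentity (S : Finset ℕ) (h0 : 0 ∈ S) :
    ∑ b ∈ S, (1/((b:ℚ)+1)) * ∏ a ∈ S.erase b, (((b:ℚ)+1-(a:ℚ))/((b:ℚ)-(a:ℚ))) = 1 := by
  classical
  set T : Finset ℚ := insert (-1) (S.image (Nat.cast)) with hT
  have hm1 : (-1 : ℚ) ∉ S.image (Nat.cast) := by
    simp only [mem_image, not_exists]
    rintro a ⟨ha, hc⟩
    have : (0:ℚ) ≤ (a:ℚ) := Nat.cast_nonneg a
    linarith
  have hTcard : T.card = S.card + 1 := by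
    rw [hT, Finset.card_insert_of_notMem hm1, Finset.card_image_of_injective _ Nat.cast_injective]
  set f : ℚ[X] := ∏ a ∈ S, (X - C ((a:ℚ) - 1)) with hf
  have hfmonic : f.Monic := monic_prod_of_monic _ _ (fun a _ => monic_X_sub_C _)
  have hfdeg : f.natDegree = S.card := by
    rw [hf, natDegree_prod_of_monic _ _ (fun a _ => monic_X_sub_C _)]
    rw [Finset.sum_congr rfl (fun a (_ : a ∈ S) => natDegree_X_sub_C ((a:ℚ) - 1))]
    simp
  have hdeg : f.degree < T.card := by
    rw [Polynomial.degree_eq_natDegree hfmonic.ne_zero, hfdeg, hTcard]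
    exact_mod_cast Nat.lt_succ_self _
  have key := coeff_top_eq_sum T ⟨-1, mem_insert_self _ _⟩ f hdeg
  have hcoeff : f.coeff (T.card - 1) = 1 := by
    rw [hTcard, Nat.add_sub_cancel, ← hfdeg]
    exact hfmonic.coeff_natDegree
  rw [hcoeff] at key
  -- evaluate the sum
  rw [Finset.sum_insert hm1] at key
  have hevalm1 : f.eval (-1) = 0 := by
    rw [hf, eval_prod]
    refine Finset.prod_eq_zero h0 ?_
    simp
  rw [hevalm1, zero_mul, zero_add, Finset.sum_image (by
    intro a _ b _ hab; exact Nat.cast_injective hab)] at key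
  refine Eq.trans ?_ key.symm
  refine Finset.sum_congr rfl fun b hb => ?_
  have herase : T.erase ((b:ℚ)) = insert (-1) ((S.erase b).image (Nat.cast)) := by
    rw [hT, Finset.erase_insert_of_ne (by
      intro hc
      have : (0:ℚ) ≤ (b:ℚ) := Nat.cast_nonneg b
      rw [← hc] at this; linarith), Finset.image_erase Nat.cast_injective]
  have hm1' : (-1:ℚ) ∉ (S.erase b).image (Nat.cast) := by
    simp only [mem_image, not_exists]
    rintro a ⟨ha, hc⟩
    have : (0:ℚ) ≤ (a:ℚ) := Nat.cast_nonneg a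
    linarith
  have heval : f.eval (b:ℚ) = ∏ a ∈ S.erase b, ((b:ℚ)+1-(a:ℚ)) := by
    rw [hf, eval_prod, ← Finset.prod_erase_mul _ _ hb]
    simp only [eval_sub, eval_X, eval_C]
    rw [show (b:ℚ) - ((b:ℚ)-1) = 1 by ring, mul_one]
    refine Finset.prod_congr rfl fun a _ => by ring
  have hweight : Lagrange.nodalWeight T id ((b:ℚ)) =
      (1/((b:ℚ)+1)) * ∏ a ∈ S.erase b, ((b:ℚ)-(a:ℚ))⁻¹ := by
    rw [Lagrange.nodalWeight, herase, Finset.prod_insert hm1']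
    simp only [id]
    rw [Finset.prod_image (by intro a _ c _ hac; exact Nat.cast_injective hac)]
    rw [show ((b:ℚ) - (-1))⁻¹ = 1/((b:ℚ)+1) by rw [sub_neg_eq_add]; exact (one_div _).symm]
  rw [heval, hweight, Finset.prod_div_distrib]
  rw [Finset.prod_inv_distrib]
  ring

end HDX

namespace HookDiff

/-- The hook length of the box `c` in the Young diagram `μ`: the number of boxes
directly to its right, directly below/above it in its column, plus the box itself. -/
def hook (μ : YoungDiagram) (c : ℕ × ℕ) : ℕ :=
  (μ.cells.filter (fun d => (d.1 = c.1 ∧ c.2 ≤ d.2) ∨ (d.2 = c.2 ∧ c.1 ≤ d.1))).card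

/-- `H μ` is the product of all hook lengths of `μ`. -/
def H (μ : YoungDiagram) : ℚ := ∏ c ∈ μ.cells, (hook μ c : ℚ)

/-- The cells that can be added to `μ` to produce a Young diagram (inner corners). -/
noncomputable def addables (μ : YoungDiagram) : Finset (ℕ × ℕ) :=
  (Finset.range (μ.card + 1) ×ˢ Finset.range (μ.card + 1)).filter
    (fun c => c ∉ μ ∧ IsLowerSet (↑(insert c μ.cells) : Set (ℕ × ℕ)))

/-- Add a box at cell `c` to `μ` (junk value `μ` if the result is not a diagram). -/
noncomputable def addBox (μ : YoungDiagram) (c : ℕ × ℕ) : YoungDiagram :=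
  if h : IsLowerSet (↑(insert c μ.cells) : Set (ℕ × ℕ)) then ⟨insert c μ.cells, h⟩ else μ

/-- The cells that can be removed from `μ` leaving a Young diagram (outer corners). -/
noncomputable def removables (μ : YoungDiagram) : Finset (ℕ × ℕ) :=
  μ.cells.filter (fun c => IsLowerSet (↑(μ.cells.erase c) : Set (ℕ × ℕ)))

/-- Remove the box at cell `c` from `μ` (junk value `μ` if the result is not a diagram). -/
noncomputable def removeBox (μ : YoungDiagram) (c : ℕ × ℕ) : YoungDiagram :=
  if h : IsLowerSet (↑(μ.cells.erase c) : Set (ℕ × ℕ)) then ⟨μ.cells.erase c, h⟩ else μ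

/-- The difference operator `D`: `Dg(λ) = Σ_{λ⁺} g(λ⁺) − g(λ)`, where `λ⁺` runs over
all partitions obtained from `λ` by adding one box. -/
noncomputable def D (g : YoungDiagram → ℚ) : YoungDiagram → ℚ :=
  fun μ => (∑ c ∈ addables μ, g (addBox μ c)) - g μ

/-- The difference operator `D⁻`: `D⁻g(λ) = |λ|·g(λ) − Σ_{λ⁻} g(λ⁻)`, where `λ⁻` runs
over all partitions obtained from `λ` by removing one box. -/
noncomputable def Dminus (g : YoungDiagram → ℚ) : YoungDiagram → ℚ :=
  fun μ => (μ.card : ℚ) * g μ - ∑ c ∈ removables μ, g (removeBox μ c)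

/-- `fskew n μ λ` is the number of standard Young tableaux of skew shape `λ/μ`
(with `n = |λ| - |μ|`), i.e. the number of chains `μ = ν₀ ⊂ ν₁ ⊂ ⋯ ⊂ ν_n = λ`
in which each diagram is obtained from the previous one by adding a single box. -/
noncomputable def fskew : ℕ → YoungDiagram → YoungDiagram → ℕ
  | 0, μ, l => if μ = l then 1 else 0
  | n + 1, μ, l => ∑ c ∈ addables μ, fskew n (addBox μ c) l

/-- `f_λ`, the number of standard Young tableaux of shape `λ`. -/
noncomputable def f (l : YoungDiagram) : ℕ := fskew l.card ⊥ l

/-- `S(λ, r) = Σ_{□∈λ} ∏_{j=1}^{r} (h_□² − j²)`. -/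
def S (l : YoungDiagram) (r : ℕ) : ℚ :=
  ∑ c ∈ l.cells, ∏ j ∈ Finset.Icc 1 r, ((hook l c : ℚ) ^ 2 - (j : ℚ) ^ 2)

/-- `K_r = (2r)!·(2r+1)! / (r!·(r+1)!²)`. -/
def K (r : ℕ) : ℚ :=
  ((2 * r).factorial : ℚ) * ((2 * r + 1).factorial : ℚ) /
    ((r.factorial : ℚ) * ((r + 1).factorial : ℚ) ^ 2)

/-- The content of the box `c = (i, j)` is `j - i`. -/
def content (c : ℕ × ℕ) : ℚ := (c.2 : ℚ) - (c.1 : ℚ)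

/-- `C(λ, r) = Σ_{□∈λ} ∏_{j=0}^{r-1} (c_□² − j²)`. -/
def Ccont (l : YoungDiagram) (r : ℕ) : ℚ :=
  ∑ c ∈ l.cells, ∏ j ∈ Finset.range r, (content c ^ 2 - (j : ℚ) ^ 2)


variable {μ : YoungDiagram}

/-! ### basic hook lemmas -/

lemma hook_eq (i j : ℕ) (hc : (i, j) ∈ μ) :
    hook μ (i, j) = (μ.rowLen i - j) + (μ.colLen j - (i+1)) := by
  classical
  rw [hook]
  have hsplit : μ.cells.filter (fun d => (d.1 = (i,j).1 ∧ (i,j).2 ≤ d.2) ∨ (d.2 = (i,j).2 ∧ (i,j).1 ≤ d.1))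
      = ((Finset.Ico j (μ.rowLen i)).image fun b => (i, b)) ∪
        ((Finset.Ico (i+1) (μ.colLen j)).image fun a => (a, j)) := by
    ext ⟨a, b⟩
    simp only [Finset.mem_filter, Finset.mem_union, Finset.mem_image, Finset.mem_Ico,
      YoungDiagram.mem_cells, Prod.mk.injEq]
    constructor
    · rintro ⟨hab, (⟨rfl, hjb⟩ | ⟨rfl, hia⟩)⟩
      · exact Or.inl ⟨b, ⟨hjb, YoungDiagram.mem_iff_lt_rowLen.mp hab⟩, rfl, rfl⟩
      · rcases eq_or_lt_of_le hia with rfl | hlt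
        · exact Or.inl ⟨b, ⟨le_refl _, YoungDiagram.mem_iff_lt_rowLen.mp hab⟩, rfl, rfl⟩
        · exact Or.inr ⟨a, ⟨hlt, YoungDiagram.mem_iff_lt_colLen.mp hab⟩, rfl, rfl⟩
    · rintro (⟨b', ⟨hb1, hb2⟩, rfl, rfl⟩ | ⟨a', ⟨ha1, ha2⟩, rfl, rfl⟩)
      · exact ⟨YoungDiagram.mem_iff_lt_rowLen.mpr hb2, Or.inl ⟨rfl, hb1⟩⟩
      · exact ⟨YoungDiagram.mem_iff_lt_colLen.mpr ha2, Or.inr ⟨rfl, Nat.le_of_succ_le ha1⟩⟩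
  rw [hsplit, Finset.card_union_of_disjoint, Finset.card_image_of_injective,
    Finset.card_image_of_injective, Nat.card_Ico, Nat.card_Ico]
  · intro x y hxy; simpa using hxy
  · intro x y hxy; simpa using hxy
  · rw [Finset.disjoint_left]
    rintro ⟨a, b⟩ h1 h2
    simp only [Finset.mem_image, Finset.mem_Ico, Prod.mk.injEq] at h1 h2
    obtain ⟨b', _, rfl, rfl⟩ := h1
    obtain ⟨a', ⟨ha, _⟩, rfl, _⟩ := h2
    omega

lemma hook_add {i j : ℕ} (hc : (i, j) ∈ μ) :
    hook μ (i, j) + (i + j + 1) = μ.rowLen i + μ.colLen j := by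
  have h1 : j < μ.rowLen i := YoungDiagram.mem_iff_lt_rowLen.mp hc
  have h2 : i < μ.colLen j := YoungDiagram.mem_iff_lt_colLen.mp hc
  have h3 : i + 1 ≤ μ.colLen j := h2
  rw [hook_eq i j hc]; omega

lemma hook_pos {c : ℕ × ℕ} (hc : c ∈ μ) : 0 < hook μ c := by
  rw [hook, Finset.card_pos]
  exact ⟨c, Finset.mem_filter.mpr ⟨(YoungDiagram.mem_cells c).mpr hc, Or.inl ⟨rfl, le_refl _⟩⟩⟩

lemma H_ne_zero (μ : YoungDiagram) : H μ ≠ 0 := by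
  rw [H]
  refine Finset.prod_ne_zero_iff.mpr fun c hc => ?_
  exact_mod_cast (hook_pos ((YoungDiagram.mem_cells c).mp hc)).ne'

/-! ### addables -/

lemma rowLen_le_card (μ : YoungDiagram) (i : ℕ) : μ.rowLen i ≤ μ.card := by
  rw [YoungDiagram.rowLen_eq_card]
  exact Finset.card_le_card (Finset.filter_subset _ _)

lemma colLen_le_card (μ : YoungDiagram) (j : ℕ) : μ.colLen j ≤ μ.card := by
  rw [YoungDiagram.colLen_eq_card]
  exact Finset.card_le_card (Finset.filter_subset _ _)

lemma mem_addables_iff {c : ℕ × ℕ} :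
    c ∈ addables μ ↔ c.2 = μ.rowLen c.1 ∧ c.1 = μ.colLen c.2 := by
  obtain ⟨k, m⟩ := c
  simp only [addables, Finset.mem_filter, Finset.mem_product, Finset.mem_range]
  constructor
  · rintro ⟨-, hnm, hlow⟩
    have key : ∀ x y : ℕ, x ≤ k → y ≤ m → (x, y) ≠ (k, m) → (x, y) ∈ μ := by
      intro x y hx hy hne
      have hmem : ((x, y) : ℕ × ℕ) ∈ (↑(insert ((k,m) : ℕ × ℕ) μ.cells) : Set (ℕ × ℕ)) :=
        hlow (a := ((k,m) : ℕ × ℕ)) (b := ((x,y) : ℕ × ℕ)) ⟨hx, hy⟩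
          (by rw [Finset.coe_insert]; exact Set.mem_insert _ _)
      rw [Finset.coe_insert, Set.mem_insert_iff] at hmem
      rcases hmem with h | h
      · exact absurd h hne
      · exact (YoungDiagram.mem_cells _).mp h
    constructor
    · have h1 : μ.rowLen k ≤ m := by
        by_contra h
        exact hnm (YoungDiagram.mem_iff_lt_rowLen.mpr (by omega))
      rcases Nat.eq_zero_or_pos m with rfl | hm
      · omega
      · have := YoungDiagram.mem_iff_lt_rowLen.mp
          (key k (m-1) (le_refl _) (by omega) (by simp; omega))
        omega
    · have h1 : μ.colLen m ≤ k := by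
        by_contra h
        exact hnm (YoungDiagram.mem_iff_lt_colLen.mpr (by omega))
      rcases Nat.eq_zero_or_pos k with rfl | hk
      · omega
      · have := YoungDiagram.mem_iff_lt_colLen.mp
          (key (k-1) m (by omega) (le_refl _) (by simp; omega))
        omega
  · rintro ⟨hrow, hcol⟩
    have hnm : (k, m) ∉ μ := by
      rw [YoungDiagram.mem_iff_lt_rowLen]; omega
    refine ⟨⟨?_, ?_⟩, hnm, ?_⟩
    · have : μ.colLen m ≤ μ.card := colLen_le_card μ m
      omega
    · have : μ.rowLen k ≤ μ.card := rowLen_le_card μ k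
      omega
    · rintro ⟨p, q⟩ ⟨x, y⟩ ⟨hx1, hx2⟩ hx
      rw [Finset.coe_insert, Set.mem_insert_iff] at hx ⊢
      rcases hx with h | hx
      · rw [Prod.mk.injEq] at h
        obtain ⟨h1, h2⟩ := h
        simp only at hx1 hx2
        by_cases hy : y < m
        · right
          have hy2 : y < μ.rowLen x := by
            have := μ.rowLen_anti x k (by omega)
            omega
          exact (YoungDiagram.mem_cells _).mpr (YoungDiagram.mem_iff_lt_rowLen.mpr hy2)
        · have hym : y = m := by omega
          subst hym
          by_cases hxk : x = k
          · left; rw [Prod.mk.injEq]; exact ⟨hxk, rfl⟩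
          · right
            have : x < μ.colLen y := by omega
            exact (YoungDiagram.mem_cells _).mpr (YoungDiagram.mem_iff_lt_colLen.mpr this)
      · right
        have := μ.isLowerSet (a := (p, q)) (b := (x, y)) ⟨hx1, hx2⟩ ((YoungDiagram.mem_cells _).mp hx)
        exact (YoungDiagram.mem_cells _).mpr this

lemma addBox_cells {c : ℕ × ℕ} (hc : c ∈ addables μ) :
    (addBox μ c).cells = insert c μ.cells := by
  have hl := (Finset.mem_filter.mp hc).2.2
  rw [addBox, dif_pos hl]

lemma not_mem_of_addable {c : ℕ × ℕ} (hc : c ∈ addables μ) : c ∉ μ :=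
  (Finset.mem_filter.mp hc).2.1

lemma addBox_card {c : ℕ × ℕ} (hc : c ∈ addables μ) :
    (addBox μ c).card = μ.card + 1 := by
  have : (addBox μ c).cells.card = (insert c μ.cells).card := by rw [addBox_cells hc]
  have hnm : c ∉ μ.cells := fun h => not_mem_of_addable hc ((YoungDiagram.mem_cells c).mp h)
  rw [YoungDiagram.card, this, Finset.card_insert_of_notMem hnm, YoungDiagram.card]

lemma le_addBox {c : ℕ × ℕ} (hc : c ∈ addables μ) : μ ≤ addBox μ c := by
  rw [← YoungDiagram.cells_subset_iff, addBox_cells hc]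
  exact Finset.subset_insert _ _

/-! ### hooks after adding a box -/

lemma hook_addBox_self {c : ℕ × ℕ} (hc : c ∈ addables μ) : hook (addBox μ c) c = 1 := by
  obtain ⟨hrow, hcol⟩ := mem_addables_iff.mp hc
  rw [hook, addBox_cells hc]
  have : (insert c μ.cells).filter
      (fun d => (d.1 = c.1 ∧ c.2 ≤ d.2) ∨ (d.2 = c.2 ∧ c.1 ≤ d.1)) = {c} := by
    ext d
    simp only [Finset.mem_filter, Finset.mem_insert, Finset.mem_singleton]
    constructor
    · rintro ⟨h | h, h2⟩
      · exact h
      · exfalso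
        have hm := (YoungDiagram.mem_cells _).mp h
        rcases h2 with ⟨h3, h4⟩ | ⟨h3, h4⟩
        · have h5 : d.2 < μ.rowLen d.1 := YoungDiagram.mem_iff_lt_rowLen.mp (by
            rw [show d = (d.1, d.2) from rfl] at hm; exact hm)
          rw [h3] at h5
          omega
        · have h5 : d.1 < μ.colLen d.2 := YoungDiagram.mem_iff_lt_colLen.mp (by
            rw [show d = (d.1, d.2) from rfl] at hm; exact hm)
          rw [h3] at h5
          omega
    · rintro rfl
      exact ⟨Or.inl rfl, Or.inl ⟨rfl, le_refl _⟩⟩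
  rw [this, Finset.card_singleton]

lemma hook_addBox {c : ℕ × ℕ} (hc : c ∈ addables μ) {d : ℕ × ℕ} (hd : d ∈ μ) :
    hook (addBox μ c) d
      = hook μ d + (if (c.1 = d.1 ∧ d.2 ≤ c.2) ∨ (c.2 = d.2 ∧ d.1 ≤ c.1) then 1 else 0) := by
  rw [hook, hook, addBox_cells hc, Finset.filter_insert]
  split_ifs with h
  · rw [Finset.card_insert_of_notMem]
    intro hmem
    exact not_mem_of_addable hc
      ((YoungDiagram.mem_cells c).mp (Finset.filter_subset _ _ hmem))
  · rw [Nat.add_zero]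

lemma H_addBox {c : ℕ × ℕ} (hc : c ∈ addables μ) :
    H (addBox μ c) = H μ
      * (∏ j ∈ Finset.range c.2, ((hook μ (c.1, j) : ℚ) + 1) / (hook μ (c.1, j) : ℚ))
      * (∏ i ∈ Finset.range c.1, ((hook μ (i, c.2) : ℚ) + 1) / (hook μ (i, c.2) : ℚ)) := by
  obtain ⟨hrow, hcol⟩ := mem_addables_iff.mp hc
  have hnm : c ∉ μ.cells := fun h => not_mem_of_addable hc ((YoungDiagram.mem_cells c).mp h)
  have step1 : H (addBox μ c) = ∏ d ∈ μ.cells, (hook (addBox μ c) d : ℚ) := by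
    rw [H, addBox_cells hc, Finset.prod_insert hnm, hook_addBox_self hc, Nat.cast_one, one_mul]
  have step2 : ∀ d ∈ μ.cells, (hook (addBox μ c) d : ℚ)
      = (hook μ d : ℚ) *
        (if d.1 = c.1 ∨ d.2 = c.2 then ((hook μ d : ℚ)+1)/(hook μ d : ℚ) else 1) := by
    intro d hd
    have hdm := (YoungDiagram.mem_cells d).mp hd
    have hdm' : (d.1, d.2) ∈ μ := by rwa [Prod.mk.eta]
    have hpos : (0:ℚ) < (hook μ d : ℚ) := by exact_mod_cast hook_pos hdm
    rw [hook_addBox hc hdm]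
    by_cases hP : d.1 = c.1 ∨ d.2 = c.2
    · have hQ : (c.1 = d.1 ∧ d.2 ≤ c.2) ∨ (c.2 = d.2 ∧ d.1 ≤ c.1) := by
        rcases hP with h | h
        · left
          refine ⟨h.symm, ?_⟩
          have h2 : d.2 < μ.rowLen d.1 := YoungDiagram.mem_iff_lt_rowLen.mp hdm'
          rw [h] at h2
          omega
        · right
          refine ⟨h.symm, ?_⟩
          have h2 : d.1 < μ.colLen d.2 := YoungDiagram.mem_iff_lt_colLen.mp hdm'
          rw [h] at h2
          omega
      rw [if_pos hQ, if_pos hP]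
      push_cast
      field_simp
    · have hQ : ¬ ((c.1 = d.1 ∧ d.2 ≤ c.2) ∨ (c.2 = d.2 ∧ d.1 ≤ c.1)) := by
        rintro (⟨h1, -⟩ | ⟨h1, -⟩)
        · exact hP (Or.inl h1.symm)
        · exact hP (Or.inr h1.symm)
      rw [if_neg hQ, if_neg hP, Nat.add_zero, mul_one]
  rw [step1, Finset.prod_congr rfl step2, Finset.prod_mul_distrib, ← H,
    ← Finset.prod_filter]
  have hsplit : μ.cells.filter (fun d => d.1 = c.1 ∨ d.2 = c.2)
      = ((Finset.range c.2).image fun j => (c.1, j))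
        ∪ ((Finset.range c.1).image fun i => (i, c.2)) := by
    ext ⟨a, b⟩
    simp only [Finset.mem_filter, Finset.mem_union, Finset.mem_image, Finset.mem_range,
      YoungDiagram.mem_cells, Prod.mk.injEq]
    constructor
    · rintro ⟨hab, h | h⟩
      · left
        refine ⟨b, ?_, h.symm, rfl⟩
        have h2 : b < μ.rowLen a := YoungDiagram.mem_iff_lt_rowLen.mp hab
        rw [h] at h2
        omega
      · right
        refine ⟨a, ?_, rfl, h.symm⟩
        have h2 : a < μ.colLen b := YoungDiagram.mem_iff_lt_colLen.mp hab
        rw [h] at h2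
        omega
    · rintro (⟨j, hj, rfl, rfl⟩ | ⟨i, hi, rfl, rfl⟩)
      · exact ⟨YoungDiagram.mem_iff_lt_rowLen.mpr (by omega), Or.inl rfl⟩
      · exact ⟨YoungDiagram.mem_iff_lt_colLen.mpr (by omega), Or.inr rfl⟩
  rw [hsplit, Finset.prod_union, Finset.prod_image (by intro x _ y _ h; simpa using h),
    Finset.prod_image (by intro x _ y _ h; simpa using h), mul_assoc]
  rw [Finset.disjoint_left]
  rintro ⟨a, b⟩ h1 h2
  simp only [Finset.mem_image, Finset.mem_range, Prod.mk.injEq] at h1 h2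
  obtain ⟨j, hj, rfl, rfl⟩ := h1
  obtain ⟨i, hi, rfl, h⟩ := h2
  omega

/-! ### beta sequences -/

def NN (μ : YoungDiagram) : ℕ := μ.colLen 0 + 1

def bn (μ : YoungDiagram) (k : ℕ) : ℕ := μ.rowLen k + (NN μ - 1 - k)

def cn (μ : YoungDiagram) (j : ℕ) : ℕ := NN μ + j - μ.colLen j

lemma colLen_lt_NN (μ : YoungDiagram) (j : ℕ) : μ.colLen j < NN μ := by
  have := μ.colLen_anti 0 j (Nat.zero_le j)
  rw [NN]; omega

lemma rowLen_NN_sub_one (μ : YoungDiagram) : μ.rowLen (NN μ - 1) = 0 := by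
  by_contra h
  have h2 : (NN μ - 1, 0) ∈ μ := YoungDiagram.mem_iff_lt_rowLen.mpr (by omega)
  have := YoungDiagram.mem_iff_lt_colLen.mp h2
  rw [NN] at this
  omega

lemma bn_NN_sub_one (μ : YoungDiagram) : bn μ (NN μ - 1) = 0 := by
  rw [bn, rowLen_NN_sub_one]; omega

lemma cn_strictMono (μ : YoungDiagram) : StrictMono (cn μ) := by
  apply strictMono_nat_of_lt_succ
  intro j
  have h1 := μ.colLen_anti j (j+1) (by omega)
  have h2 := colLen_lt_NN μ j
  rw [cn, cn]; omega

lemma bn_lt_bn (μ : YoungDiagram) {i j : ℕ} (hij : i < j) (hj : j < NN μ) :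
    bn μ j < bn μ i := by
  have h1 := μ.rowLen_anti i j (le_of_lt hij)
  rw [bn, bn]; omega

lemma bn_injOn (μ : YoungDiagram) : Set.InjOn (bn μ) (Finset.range (NN μ)) := by
  intro i hi j hj hij
  simp only [Finset.coe_range, Set.mem_Iio] at hi hj
  rcases lt_trichotomy i j with h | h | h
  · exact absurd hij (bn_lt_bn μ h hj).ne'
  · exact h
  · exact absurd hij (bn_lt_bn μ h hi).ne

section Corner

variable {k m : ℕ} (hm : m = μ.rowLen k) (hk : k = μ.colLen m)

include hm hk

lemma corner_k_lt : k < NN μ := by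
  have := μ.colLen_anti 0 m (Nat.zero_le m)
  rw [NN]; omega

lemma corner_row_hook {j : ℕ} (hj : j < m) :
    hook μ (k, j) + cn μ j = bn μ k := by
  have hmem : (k, j) ∈ μ := YoungDiagram.mem_iff_lt_rowLen.mpr (by omega)
  have h1 := hook_add hmem
  have h2 : k < μ.colLen j := YoungDiagram.mem_iff_lt_colLen.mp hmem
  have h3 := colLen_lt_NN μ j
  have h4 := corner_k_lt (μ := μ) hm hk
  rw [bn, cn]; omega

lemma corner_col_hook {i : ℕ} (hi : i < k) :
    hook μ (i, m) + bn μ k + 1 = bn μ i := by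
  have hmem : (i, m) ∈ μ := YoungDiagram.mem_iff_lt_colLen.mpr (by omega)
  have h1 := hook_add hmem
  have h4 := corner_k_lt (μ := μ) hm hk
  rw [bn, bn]; omega

lemma corner_not_succ {i : ℕ} (hi : i < k) : bn μ i ≠ bn μ k + 1 := by
  intro h
  have h4 := corner_k_lt (μ := μ) hm hk
  have h5 : (k - 1, m) ∈ μ := YoungDiagram.mem_iff_lt_colLen.mpr (by omega)
  have h6 : m < μ.rowLen (k-1) := YoungDiagram.mem_iff_lt_rowLen.mp h5
  have h7 := μ.rowLen_anti i (k-1) (by omega)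
  rw [bn, bn] at h
  omega

lemma corner_cimage :
    (Finset.range m).image (cn μ) =
      Finset.range (bn μ k) \ ((Finset.Ioo k (NN μ)).image (bn μ)) := by
  have h4 := corner_k_lt (μ := μ) hm hk
  apply Finset.eq_of_subset_of_card_le
  · intro x hx
    simp only [Finset.mem_image, Finset.mem_range] at hx
    obtain ⟨j, hj, rfl⟩ := hx
    have hmem : (k, j) ∈ μ := YoungDiagram.mem_iff_lt_rowLen.mpr (by omega)
    have hckj : k < μ.colLen j := YoungDiagram.mem_iff_lt_colLen.mp hmem
    have hNj := colLen_lt_NN μ j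
    rw [Finset.mem_sdiff, Finset.mem_range]
    constructor
    · rw [cn, bn]; omega
    · simp only [Finset.mem_image, Finset.mem_Ioo, not_exists]
      rintro i ⟨⟨hki, hiN⟩, hbi⟩
      by_cases hij : j < μ.rowLen i
      · have h2 : i < μ.colLen j :=
          YoungDiagram.mem_iff_lt_colLen.mp (YoungDiagram.mem_iff_lt_rowLen.mpr hij)
        rw [cn, bn] at hbi; omega
      · have h2 : μ.colLen j ≤ i := by
          by_contra h
          exact hij (YoungDiagram.mem_iff_lt_rowLen.mp
            (YoungDiagram.mem_iff_lt_colLen.mpr (by omega)))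
        rw [cn, bn] at hbi; omega
  · have hsub : (Finset.Ioo k (NN μ)).image (bn μ) ⊆ Finset.range (bn μ k) := by
      intro x hx
      simp only [Finset.mem_image, Finset.mem_Ioo] at hx
      obtain ⟨i, ⟨h1, h2⟩, rfl⟩ := hx
      exact Finset.mem_range.mpr (bn_lt_bn μ h1 h2)
    rw [Finset.card_sdiff_of_subset hsub]
    rw [Finset.card_image_of_injOn (fun i hi j hj hij => by
      simp only [Finset.mem_coe, Finset.mem_Ioo] at hi hj
      exact bn_injOn μ (by simp; omega) (by simp; omega) hij)]
    rw [Finset.card_image_of_injOn (((cn_strictMono μ).injective).injOn)]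
    rw [Finset.card_range, Nat.card_Ioo, Finset.card_range, bn]
    omega

end Corner

lemma tele (B : ℕ) : ∏ u ∈ Finset.range B, (((u:ℚ)+2)/((u:ℚ)+1)) = B + 1 := by
  induction B with
  | zero => simp
  | succ B ih =>
    rw [Finset.prod_range_succ, ih]
    have h : ((B:ℚ)+1) ≠ 0 := by positivity
    push_cast
    field_simp
    ring

lemma tele2 (B : ℕ) : ∏ t ∈ Finset.range B, (((B:ℚ) - t + 1)/((B:ℚ) - t)) = B + 1 := by
  rw [← Finset.prod_range_reflect]
  have hcong : ∀ j ∈ Finset.range B,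
      ((B:ℚ) - ((B - 1 - j : ℕ):ℚ) + 1)/((B:ℚ) - ((B - 1 - j : ℕ):ℚ)) = ((j:ℚ)+2)/((j:ℚ)+1) := by
    intro j hj
    rw [Finset.mem_range] at hj
    have h1 : (((B - 1 - j : ℕ)):ℚ) = (B:ℚ) - 1 - (j:ℚ) := by
      have h2 : B - 1 - j + (1 + j) = B := by omega
      have h3 := congrArg (fun n : ℕ => (n:ℚ)) h2
      push_cast at h3
      linarith
    rw [h1]
    congr 1 <;> ring
  rw [Finset.prod_congr rfl hcong, tele B]

section Corner2

variable {k m : ℕ} (hm : m = μ.rowLen k) (hk : k = μ.colLen m)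

include hm hk

lemma corner_row_prod :
    ∏ j ∈ Finset.range m, ((hook μ (k, j) : ℚ) + 1) / (hook μ (k, j) : ℚ)
      = ((bn μ k : ℚ) + 1) * ∏ i ∈ Finset.Ioo k (NN μ),
          (((bn μ k:ℚ) - (bn μ i:ℚ)) / ((bn μ k:ℚ) - (bn μ i:ℚ) + 1)) := by
  have h4 := corner_k_lt (μ := μ) hm hk
  set G : ℕ → ℚ := fun t => ((bn μ k : ℚ) - t + 1)/((bn μ k : ℚ) - t) with hG
  have step1 : ∀ j ∈ Finset.range m,
      ((hook μ (k, j) : ℚ) + 1) / (hook μ (k, j) : ℚ) = G (cn μ j) := by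
    intro j hj
    rw [Finset.mem_range] at hj
    have h5 := corner_row_hook hm hk hj
    have hcast : (hook μ (k,j) : ℚ) = (bn μ k : ℚ) - (cn μ j : ℚ) := by
      have h6 := congrArg (fun n : ℕ => (n:ℚ)) h5
      push_cast at h6
      linarith
    rw [hG]
    simp only
    rw [hcast]
  rw [Finset.prod_congr rfl step1,
    ← Finset.prod_image (f := G) (g := cn μ)
      (fun x _ y _ h => (cn_strictMono μ).injective h),
    corner_cimage hm hk]
  have hsub : (Finset.Ioo k (NN μ)).image (bn μ) ⊆ Finset.range (bn μ k) := by
    intro x hx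
    simp only [Finset.mem_image, Finset.mem_Ioo] at hx
    obtain ⟨i, ⟨h1, h2⟩, rfl⟩ := hx
    exact Finset.mem_range.mpr (bn_lt_bn μ h1 h2)
  have key := Finset.prod_sdiff (f := G) hsub
  have htot : ∏ t ∈ Finset.range (bn μ k), G t = (bn μ k : ℚ) + 1 := tele2 (bn μ k)
  rw [htot] at key
  have himg : ∏ x ∈ (Finset.Ioo k (NN μ)).image (bn μ), G x
      = ∏ i ∈ Finset.Ioo k (NN μ), (((bn μ k:ℚ) - bn μ i + 1) / ((bn μ k:ℚ) - bn μ i)) := by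
    rw [Finset.prod_image (fun x hx y hy h => by
      simp only [Finset.mem_coe, Finset.mem_Ioo] at hx hy
      exact bn_injOn μ (by simp only [Finset.coe_range, Set.mem_Iio]; omega)
        (by simp only [Finset.coe_range, Set.mem_Iio]; omega) h)]
  have hposd : ∀ i ∈ Finset.Ioo k (NN μ), (0:ℚ) < (bn μ k:ℚ) - bn μ i := by
    intro i hi
    simp only [Finset.mem_Ioo] at hi
    have := bn_lt_bn μ hi.1 hi.2
    have h7 : (bn μ i : ℚ) < bn μ k := by exact_mod_cast this
    linarith
  have hsne : ∏ x ∈ (Finset.Ioo k (NN μ)).image (bn μ), G x ≠ 0 := by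
    rw [himg]
    refine Finset.prod_ne_zero_iff.mpr fun i hi => ?_
    have := hposd i hi
    apply div_ne_zero <;> intro h <;> nlinarith [this]
  refine mul_right_cancel₀ hsne ?_
  rw [key, himg, mul_assoc, ← Finset.prod_mul_distrib]
  rw [Finset.prod_congr rfl (fun i hi => ?_), Finset.prod_const_one, mul_one]
  have h8 := hposd i hi
  rw [div_mul_div_comm,
    show ((bn μ k:ℚ) - bn μ i) * ((bn μ k:ℚ) - bn μ i + 1)
      = ((bn μ k:ℚ) - bn μ i + 1) * ((bn μ k:ℚ) - bn μ i) by ring]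
  exact div_self (by nlinarith [h8])

lemma corner_col_prod :
    ∏ i ∈ Finset.range k, ((hook μ (i, m) : ℚ) + 1) / (hook μ (i, m) : ℚ)
      = ∏ i ∈ Finset.range k, (((bn μ i:ℚ) - bn μ k) / ((bn μ i:ℚ) - bn μ k - 1)) := by
  refine Finset.prod_congr rfl fun i hi => ?_
  rw [Finset.mem_range] at hi
  have h5 := corner_col_hook hm hk hi
  have hcast : (hook μ (i,m) : ℚ) = (bn μ i : ℚ) - bn μ k - 1 := by
    have h6 := congrArg (fun n : ℕ => (n:ℚ)) h5
    push_cast at h6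
    linarith
  rw [hcast]
  congr 1
  ring

lemma corner_H (hadd : (k, m) ∈ addables μ) :
    1 / H (addBox μ (k, m)) = (1 / H μ) * ((1/((bn μ k:ℚ)+1)) *
      ∏ i ∈ (Finset.range (NN μ)).erase k,
        (((bn μ k:ℚ)+1-(bn μ i:ℚ))/((bn μ k:ℚ)-(bn μ i:ℚ)))) := by
  have h4 := corner_k_lt (μ := μ) hm hk
  have hB : ((bn μ k:ℚ)+1) ≠ 0 := by positivity
  set B : ℚ := (bn μ k : ℚ) with hBdef
  set A : ℚ := (B + 1) * ∏ i ∈ Finset.Ioo k (NN μ),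
    ((B - (bn μ i:ℚ)) / (B - (bn μ i:ℚ) + 1)) with hA
  set Cc : ℚ := ∏ i ∈ Finset.range k, (((bn μ i:ℚ) - B) / ((bn μ i:ℚ) - B - 1)) with hC
  set T : ℚ := (1/(B+1)) * ∏ i ∈ (Finset.range (NN μ)).erase k,
    ((B+1-(bn μ i:ℚ))/(B-(bn μ i:ℚ))) with hT
  have hHnu : H (addBox μ (k, m)) = H μ * A * Cc := by
    have := H_addBox hadd
    simp only at this
    rw [this, corner_row_prod hm hk, corner_col_prod hm hk]
  have hsplit : (Finset.range (NN μ)).erase k = Finset.range k ∪ Finset.Ioo k (NN μ) := by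
    ext x
    simp only [Finset.mem_erase, Finset.mem_range, Finset.mem_union, Finset.mem_Ioo]
    omega
  have hdisj : Disjoint (Finset.range k) (Finset.Ioo k (NN μ)) := by
    rw [Finset.disjoint_left]
    intro x hx hx2
    simp only [Finset.mem_range] at hx
    simp only [Finset.mem_Ioo] at hx2
    omega
  have hACT : A * Cc * T = 1 := by
    rw [hA, hC, hT, hsplit, Finset.prod_union hdisj]
    have hIoo : (∏ i ∈ Finset.Ioo k (NN μ), ((B - (bn μ i:ℚ)) / (B - (bn μ i:ℚ) + 1)))
        * (∏ i ∈ Finset.Ioo k (NN μ), ((B+1-(bn μ i:ℚ))/(B-(bn μ i:ℚ)))) = 1 := by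
      rw [← Finset.prod_mul_distrib]
      refine Finset.prod_eq_one fun i hi => ?_
      simp only [Finset.mem_Ioo] at hi
      have h7 : (bn μ i : ℚ) < B := by
        rw [hBdef]; exact_mod_cast bn_lt_bn μ hi.1 hi.2
      rw [div_mul_div_comm,
        show (B - (bn μ i:ℚ)) * (B+1-(bn μ i:ℚ))
          = (B - (bn μ i:ℚ) + 1) * (B - (bn μ i:ℚ)) by ring]
      exact div_self (by nlinarith)
    have hrange : (∏ i ∈ Finset.range k, (((bn μ i:ℚ) - B) / ((bn μ i:ℚ) - B - 1)))
        * (∏ i ∈ Finset.range k, ((B+1-(bn μ i:ℚ))/(B-(bn μ i:ℚ)))) = 1 := by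
      rw [← Finset.prod_mul_distrib]
      refine Finset.prod_eq_one fun i hi => ?_
      rw [Finset.mem_range] at hi
      have h7 : B < (bn μ i : ℚ) := by
        rw [hBdef]; exact_mod_cast bn_lt_bn μ hi h4
      have h8 : (bn μ i : ℚ) ≠ B + 1 := by
        rw [hBdef]
        intro hcon
        apply corner_not_succ hm hk hi
        exact_mod_cast hcon
      rw [div_mul_div_comm,
        show ((bn μ i:ℚ) - B) * (B+1-(bn μ i:ℚ))
          = ((bn μ i:ℚ) - B - 1) * (B-(bn μ i:ℚ)) by ring]
      refine div_self (mul_ne_zero ?_ ?_)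
      · intro hcon; apply h8; linarith
      · intro hcon; nlinarith
    calc ((B + 1) * ∏ i ∈ Finset.Ioo k (NN μ), ((B - (bn μ i:ℚ)) / (B - (bn μ i:ℚ) + 1)))
          * (∏ i ∈ Finset.range k, (((bn μ i:ℚ) - B) / ((bn μ i:ℚ) - B - 1)))
          * ((1/(B+1)) * ((∏ i ∈ Finset.range k, ((B+1-(bn μ i:ℚ))/(B-(bn μ i:ℚ))))
            * (∏ i ∈ Finset.Ioo k (NN μ), ((B+1-(bn μ i:ℚ))/(B-(bn μ i:ℚ))))))
        = ((B+1) * (1/(B+1)))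
          * ((∏ i ∈ Finset.Ioo k (NN μ), ((B - (bn μ i:ℚ)) / (B - (bn μ i:ℚ) + 1)))
            * (∏ i ∈ Finset.Ioo k (NN μ), ((B+1-(bn μ i:ℚ))/(B-(bn μ i:ℚ)))))
          * ((∏ i ∈ Finset.range k, (((bn μ i:ℚ) - B) / ((bn μ i:ℚ) - B - 1)))
            * (∏ i ∈ Finset.range k, ((B+1-(bn μ i:ℚ))/(B-(bn μ i:ℚ))))) := by ring
      _ = 1 := by
          rw [hIoo, hrange, mul_one, mul_one, mul_one_div, div_self hB]
  have hACne : A * Cc ≠ 0 := by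
    intro hcon
    apply H_ne_zero (addBox μ (k, m))
    rw [hHnu, mul_assoc, hcon, mul_zero]
  have hTinv : T = (A * Cc)⁻¹ := eq_inv_of_mul_eq_one_right hACT
  rw [hHnu, hTinv, one_div, one_div, mul_assoc, mul_inv]

end Corner2

lemma colLen_rowLen_le (μ : YoungDiagram) (k : ℕ) : μ.colLen (μ.rowLen k) ≤ k := by
  by_contra h
  have h2 : (k, μ.rowLen k) ∈ μ := YoungDiagram.mem_iff_lt_colLen.mpr (by omega)
  have := YoungDiagram.mem_iff_lt_rowLen.mp h2
  omega

lemma erase_image_bn (μ : YoungDiagram) {k : ℕ} (hk : k < NN μ) :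
    ((Finset.range (NN μ)).image (bn μ)).erase (bn μ k)
      = ((Finset.range (NN μ)).erase k).image (bn μ) := by
  ext x
  simp only [Finset.mem_erase, Finset.mem_image, Finset.mem_range]
  constructor
  · rintro ⟨hne, i, hi, rfl⟩
    exact ⟨i, ⟨fun h => hne (by rw [h]), hi⟩, rfl⟩
  · rintro ⟨i, ⟨hik, hi⟩, rfl⟩
    refine ⟨fun h => hik ?_, i, hi, rfl⟩
    exact bn_injOn μ (by simp only [Finset.coe_range, Set.mem_Iio]; omega)
      (by simp only [Finset.coe_range, Set.mem_Iio]; omega) h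

lemma sum_tk (μ : YoungDiagram) :
    ∑ k ∈ Finset.range (NN μ), ((1/((bn μ k:ℚ)+1)) *
      ∏ i ∈ (Finset.range (NN μ)).erase k,
        (((bn μ k:ℚ)+1-(bn μ i:ℚ))/((bn μ k:ℚ)-(bn μ i:ℚ)))) = 1 := by
  have h0 : 0 ∈ (Finset.range (NN μ)).image (bn μ) := by
    refine Finset.mem_image.mpr ⟨NN μ - 1, Finset.mem_range.mpr (by rw [NN]; omega), ?_⟩
    exact bn_NN_sub_one μ
  have key := HDX.keyIdentity ((Finset.range (NN μ)).image (bn μ)) h0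
  rw [Finset.sum_image (fun x hx y hy h => bn_injOn μ (by simpa using hx) (by simpa using hy) h)]
    at key
  refine Eq.trans (Finset.sum_congr rfl fun k hk => ?_) key
  rw [Finset.mem_range] at hk
  rw [erase_image_bn μ hk, Finset.prod_image (fun x hx y hy h => by
    simp only [Finset.mem_coe, Finset.mem_erase, Finset.mem_range] at hx hy
    exact bn_injOn μ (by simp only [Finset.coe_range, Set.mem_Iio]; exact hx.2)
      (by simp only [Finset.coe_range, Set.mem_Iio]; exact hy.2) h)]

lemma sum_inv_H_addBox (μ : YoungDiagram) :
    ∑ c ∈ addables μ, 1 / H (addBox μ c) = 1 / H μ := by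
  classical
  set K : Finset ℕ := (Finset.range (NN μ)).filter (fun k => μ.colLen (μ.rowLen k) = k)
    with hK
  have haddK : addables μ = K.image (fun k => (k, μ.rowLen k)) := by
    ext ⟨k, m⟩
    rw [mem_addables_iff]
    simp only [Finset.mem_image, hK, Finset.mem_filter, Finset.mem_range, Prod.mk.injEq]
    constructor
    · rintro ⟨hm, hk⟩
      refine ⟨k, ⟨corner_k_lt (μ := μ) hm hk, ?_⟩, rfl, hm.symm⟩
      rw [← hm]; exact hk.symm
    · rintro ⟨k', ⟨hk', hcol⟩, rfl, rfl⟩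
      exact ⟨rfl, hcol.symm⟩
  rw [haddK, Finset.sum_image (fun x _ y _ h => by simpa using (Prod.mk.injEq _ _ _ _).mp h |>.1)]
  have hterm : ∀ k ∈ K, 1 / H (addBox μ (k, μ.rowLen k))
      = (1 / H μ) * ((1/((bn μ k:ℚ)+1)) *
        ∏ i ∈ (Finset.range (NN μ)).erase k,
          (((bn μ k:ℚ)+1-(bn μ i:ℚ))/((bn μ k:ℚ)-(bn μ i:ℚ)))) := by
    intro k hkK
    simp only [hK, Finset.mem_filter, Finset.mem_range] at hkK
    have hm : μ.rowLen k = μ.rowLen k := rfl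
    have hk2 : k = μ.colLen (μ.rowLen k) := hkK.2.symm
    exact corner_H rfl hk2 (mem_addables_iff.mpr ⟨rfl, hk2⟩)
  rw [Finset.sum_congr rfl hterm, ← Finset.mul_sum]
  have hext : ∑ k ∈ K, ((1/((bn μ k:ℚ)+1)) *
      ∏ i ∈ (Finset.range (NN μ)).erase k,
        (((bn μ k:ℚ)+1-(bn μ i:ℚ))/((bn μ k:ℚ)-(bn μ i:ℚ))))
      = ∑ k ∈ Finset.range (NN μ), ((1/((bn μ k:ℚ)+1)) *
      ∏ i ∈ (Finset.range (NN μ)).erase k,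
        (((bn μ k:ℚ)+1-(bn μ i:ℚ))/((bn μ k:ℚ)-(bn μ i:ℚ)))) := by
    refine Finset.sum_subset (Finset.filter_subset _ _) ?_
    intro k hkr hknotK
    rw [Finset.mem_range] at hkr
    simp only [hK, Finset.mem_filter, Finset.mem_range] at hknotK
    have hcolne : μ.colLen (μ.rowLen k) ≠ k := fun h => hknotK ⟨hkr, h⟩
    have hcolle := colLen_rowLen_le μ k
    have hkpos : 0 < k := by
      rcases Nat.eq_zero_or_pos k with rfl | h
      · exact absurd (Nat.le_zero.mp hcolle) hcolne
      · exact h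
    have hroweq : μ.rowLen (k-1) = μ.rowLen k := by
      have h1 := μ.rowLen_anti (k-1) k (by omega)
      by_contra h
      have h2 : μ.rowLen k < μ.rowLen (k-1) := by omega
      have h3 : (k-1, μ.rowLen k) ∈ μ := YoungDiagram.mem_iff_lt_rowLen.mpr h2
      have h4 := YoungDiagram.mem_iff_lt_colLen.mp h3
      omega
    have hbn : bn μ (k-1) = bn μ k + 1 := by
      rw [bn, bn, hroweq, NN]
      have := μ.colLen_anti 0 (μ.rowLen k) (Nat.zero_le _)
      rw [NN] at hkr
      omega
    have hmem : k - 1 ∈ (Finset.range (NN μ)).erase k := by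
      simp only [Finset.mem_erase, Finset.mem_range]
      omega
    rw [Finset.prod_eq_zero hmem, mul_zero]
    rw [hbn]
    push_cast
    rw [show (bn μ k:ℚ)+1-((bn μ k:ℚ)+1) = 0 by ring, zero_div]
  rw [hext, sum_tk, mul_one]

/-! ### assembly -/

lemma fskew_ne_zero {n : ℕ} {ν l : YoungDiagram} (h : fskew n ν l ≠ 0) :
    ν ≤ l ∧ l.card = ν.card + n := by
  induction n generalizing ν with
  | zero =>
    rw [fskew] at h
    split_ifs at h with he
    · subst he; exact ⟨le_refl _, rfl⟩
    · exact absurd rfl h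
  | succ n ih =>
    rw [fskew] at h
    obtain ⟨c, hc, hne⟩ : ∃ c ∈ addables ν, fskew n (addBox ν c) l ≠ 0 := by
      by_contra hall
      push_neg at hall
      exact h (Finset.sum_eq_zero hall)
    obtain ⟨h1, h2⟩ := ih hne
    refine ⟨le_trans (le_addBox hc) h1, ?_⟩
    rw [h2, addBox_card hc]
    omega

lemma cells_subset_square {l : YoungDiagram} :
    l.cells ⊆ Finset.range l.card ×ˢ Finset.range l.card := by
  intro c hc
  have hm := (YoungDiagram.mem_cells c).mp hc
  have hm' : (c.1, c.2) ∈ l := by rwa [Prod.mk.eta]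
  have h1 : c.2 < l.rowLen c.1 := YoungDiagram.mem_iff_lt_rowLen.mp hm'
  have h2 : c.1 < l.colLen c.2 := YoungDiagram.mem_iff_lt_colLen.mp hm'
  have h3 := rowLen_le_card l c.1
  have h4 := colLen_le_card l c.2
  rw [Finset.mem_product, Finset.mem_range, Finset.mem_range]
  omega

lemma finite_card (μ : YoungDiagram) (M : ℕ) :
    {l : YoungDiagram | μ ≤ l ∧ l.card = M}.Finite := by
  classical
  have himg : (YoungDiagram.cells '' {l : YoungDiagram | μ ≤ l ∧ l.card = M})
      ⊆ ↑((Finset.range M ×ˢ Finset.range M).powerset) := by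
    rintro s ⟨l, ⟨-, hl⟩, rfl⟩
    rw [Finset.mem_coe, Finset.mem_powerset]
    rw [← hl]
    exact cells_subset_square
  apply Set.Finite.of_finite_image (Set.Finite.subset (Finset.finite_toSet _) himg)
  intro a _ b _ h
  exact YoungDiagram.ext h

/-- `Σ_{|λ/μ|=n} f_{λ/μ}/H_λ = 1/H_μ`. -/
theorem sum_skew_div_H (μ : YoungDiagram) (n : ℕ) :
    (∑ᶠ l ∈ {l : YoungDiagram | μ ≤ l ∧ l.card = μ.card + n}, (fskew n μ l : ℚ) / H l)
      = 1 / H μ := by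
  induction n generalizing μ with
  | zero =>
    have hset : {l : YoungDiagram | μ ≤ l ∧ l.card = μ.card + 0} = {μ} := by
      ext l
      simp only [Set.mem_setOf_eq, Set.mem_singleton_iff, Nat.add_zero]
      constructor
      · rintro ⟨h1, h2⟩
        exact (YoungDiagram.ext (Finset.eq_of_subset_of_card_le
          (YoungDiagram.cells_subset_iff.mpr h1) (le_of_eq h2))).symm
      · rintro rfl
        exact ⟨le_refl _, rfl⟩
    rw [hset, finsum_mem_singleton, fskew]
    simp
  | succ n ih =>
    have hfin := finite_card μ (μ.card + (n+1))
    rw [finsum_mem_eq_finite_toFinset_sum _ hfin]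
    have hterm : ∀ l ∈ hfin.toFinset, (fskew (n+1) μ l : ℚ) / H l
        = ∑ c ∈ addables μ, (fskew n (addBox μ c) l : ℚ) / H l := by
      intro l _
      rw [fskew]
      push_cast
      rw [Finset.sum_div]
    rw [Finset.sum_congr rfl hterm, Finset.sum_comm]
    have hinner : ∀ c ∈ addables μ,
        ∑ l ∈ hfin.toFinset, (fskew n (addBox μ c) l : ℚ) / H l = 1 / H (addBox μ c) := by
      intro c hc
      have hfin2 := finite_card (addBox μ c) ((addBox μ c).card + n)
      have hsub : hfin2.toFinset ⊆ hfin.toFinset := by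
        intro l hl
        rw [Set.Finite.mem_toFinset] at hl ⊢
        obtain ⟨h1, h2⟩ := hl
        refine ⟨le_trans (le_addBox hc) h1, ?_⟩
        rw [h2, addBox_card hc]
        omega
      have hzero : ∀ l ∈ hfin.toFinset, l ∉ hfin2.toFinset
          → (fskew n (addBox μ c) l : ℚ) / H l = 0 := by
        intro l hl hl2
        rw [Set.Finite.mem_toFinset] at hl hl2
        have : fskew n (addBox μ c) l = 0 := by
          by_contra h
          obtain ⟨h1, h2⟩ := fskew_ne_zero h
          exact hl2 ⟨h1, h2⟩
        rw [this, Nat.cast_zero, zero_div]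
      rw [← Finset.sum_subset hsub hzero]
      rw [← finsum_mem_eq_finite_toFinset_sum _ hfin2]
      exact ih (addBox μ c)
    rw [Finset.sum_congr rfl hinner]
    exact sum_inv_H_addBox μ


end HookDiff
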